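/- Let c > 0 (representing 2πP₀/(P_PIN·M) − π > −π with P₀ > 0) and define f(t) = (c + 2t)·cos²(t) on [0, π/2), assuming c + 2t > 0 for all t in this interval. Then f has a unique critical point t⋆ ∈ (0, π/2), characterized by 1/(c + 2t⋆) = tan(t⋆), and f attains its maximum on [0, π/2) at t⋆. -/

import Mathlib

open Real

/-- Lemma 4 (abstract form): for `c > 0`, the function `f(t) = (c + 2t)·cos²t`
on `[0, π/2)` has a unique critical point `t⋆ ∈ (0, π/2)`, characterized by
`1/(c + 2t⋆) = tan t⋆`, and `f` attains its maximum on `[0, π/2)` at `t⋆`. -/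
theorem stmt_5 (c : ℝ) (hc : 0 < c)
    (f : ℝ → ℝ) (hf : ∀ t, f t = (c + 2 * t) * Real.cos t ^ 2) :
    ∃ tstar ∈ Set.Ioo (0 : ℝ) (Real.pi / 2),
      (1 / (c + 2 * tstar) = Real.tan tstar) ∧
      (∀ t ∈ Set.Ico (0 : ℝ) (Real.pi / 2), f t ≤ f tstar) ∧
      (∀ t ∈ Set.Ioo (0 : ℝ) (Real.pi / 2),
        1 / (c + 2 * t) = Real.tan t → t = tstar) := by
  have hpi : (0:ℝ) < Real.pi / 2 := by positivity
  set g : ℝ → ℝ := fun t => Real.sin t * (c + 2 * t) - Real.cos t with hgdef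
  have hlin : ∀ t : ℝ, HasDerivAt (fun t => c + 2 * t) 2 t := by
    intro t
    have := ((hasDerivAt_id t).const_mul 2).const_add c
    simpa using this
  have hg' : ∀ t : ℝ, HasDerivAt g (Real.cos t * (c + 2 * t) + 3 * Real.sin t) t := by
    intro t
    have h := ((Real.hasDerivAt_sin t).mul (hlin t)).sub (Real.hasDerivAt_cos t)
    exact h.congr_deriv (by ring)
  have hgc : Continuous g := by
    have : ∀ t, g t = Real.sin t * (c + 2 * t) - Real.cos t := fun t => rfl
    continuity
  -- g strictly monotone on [0, π/2]
  have hgmono : StrictMonoOn g (Set.Icc 0 (Real.pi / 2)) := by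
    apply strictMonoOn_of_deriv_pos (convex_Icc _ _) hgc.continuousOn
    intro t ht
    rw [interior_Icc] at ht
    rw [(hg' t).deriv]
    have hcos : 0 < Real.cos t := Real.cos_pos_of_mem_Ioo ⟨by linarith [ht.1], ht.2⟩
    have hsin : 0 < Real.sin t :=
      Real.sin_pos_of_pos_of_lt_pi ht.1 (by linarith [Real.pi_pos, ht.2])
    have : 0 < c + 2 * t := by linarith [ht.1]
    positivity
  -- IVT for existence of root of g
  have h0 : g 0 = -1 := by simp [hgdef]
  have hhalf : g (Real.pi / 2) = c + Real.pi := by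
    simp [hgdef]; ring
  obtain ⟨tstar, htmem, htzero⟩ :
      ∃ t ∈ Set.Icc (0:ℝ) (Real.pi / 2), g t = 0 := by
    have := intermediate_value_Icc (le_of_lt hpi) hgc.continuousOn
    have h0m : (0:ℝ) ∈ Set.Icc (g 0) (g (Real.pi / 2)) := by
      rw [h0, hhalf]; constructor <;> linarith [Real.pi_pos]
    obtain ⟨t, ht, hgt⟩ := this h0m
    exact ⟨t, ht, hgt⟩
  have htIoo : tstar ∈ Set.Ioo (0:ℝ) (Real.pi / 2) := by
    rcases htmem with ⟨h1, h2⟩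
    constructor
    · rcases lt_or_eq_of_le h1 with h | h
      · exact h
      · exfalso; rw [← h] at htzero; rw [h0] at htzero; linarith
    · rcases lt_or_eq_of_le h2 with h | h
      · exact h
      · exfalso; rw [h] at htzero; rw [hhalf] at htzero; linarith [Real.pi_pos]
  have hcosstar : 0 < Real.cos tstar :=
    Real.cos_pos_of_mem_Ioo ⟨by linarith [htIoo.1], htIoo.2⟩
  have hcstar : 0 < c + 2 * tstar := by linarith [htIoo.1]
  have hkey : Real.sin tstar * (c + 2 * tstar) = Real.cos tstar := by
    have : g tstar = Real.sin tstar * (c + 2 * tstar) - Real.cos tstar := rfl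
    linarith [htzero, this.symm ▸ htzero]
  refine ⟨tstar, htIoo, ?_, ?_, ?_⟩
  · rw [Real.tan_eq_sin_div_cos]
    field_simp
    linarith [hkey]
  · -- maximum
    intro t ht
    set F : ℝ → ℝ := fun t => (c + 2 * t) * Real.cos t ^ 2 with hFdef
    have hFc : Continuous F := by continuity
    have hF' : ∀ t : ℝ, HasDerivAt F
        (2 * Real.cos t ^ 2 - 2 * (c + 2 * t) * Real.sin t * Real.cos t) t := by
      intro t
      have h2 : HasDerivAt (fun t => Real.cos t ^ 2)
          (2 * Real.cos t ^ 1 * (-Real.sin t)) t := (Real.hasDerivAt_cos t).pow 2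
      have h := (hlin t).mul h2
      exact h.congr_deriv (by ring)
    rw [hf t, hf tstar]
    have hmono : MonotoneOn F (Set.Icc 0 tstar) := by
      apply ((strictMonoOn_of_deriv_pos (convex_Icc _ _) hFc.continuousOn ?_)).monotoneOn
      intro s hs
      rw [interior_Icc] at hs
      rw [(hF' s).deriv]
      have hcos : 0 < Real.cos s :=
        Real.cos_pos_of_mem_Ioo ⟨by linarith [hs.1], by linarith [htIoo.2, hs.2]⟩
      have hglt : g s < g tstar := hgmono ⟨le_of_lt hs.1, by linarith [htIoo.2, hs.2]⟩
        ⟨le_of_lt htIoo.1, le_of_lt htIoo.2⟩ hs.2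
      rw [htzero] at hglt
      have : Real.sin s * (c + 2 * s) < Real.cos s := by
        have : g s = Real.sin s * (c + 2 * s) - Real.cos s := rfl
        linarith [hglt]
      nlinarith
    have hanti : AntitoneOn F (Set.Icc tstar (Real.pi / 2)) := by
      apply ((strictAntiOn_of_deriv_neg (convex_Icc _ _) hFc.continuousOn ?_)).antitoneOn
      intro s hs
      rw [interior_Icc] at hs
      rw [(hF' s).deriv]
      have hcos : 0 < Real.cos s :=
        Real.cos_pos_of_mem_Ioo ⟨by linarith [htIoo.1, hs.1], hs.2⟩
      have hglt : g tstar < g s := hgmono ⟨le_of_lt htIoo.1, le_of_lt htIoo.2⟩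
        ⟨by linarith [htIoo.1, hs.1], le_of_lt hs.2⟩ hs.1
      rw [htzero] at hglt
      have : Real.cos s < Real.sin s * (c + 2 * s) := by
        have : g s = Real.sin s * (c + 2 * s) - Real.cos s := rfl
        linarith [hglt]
      nlinarith
    rcases le_total t tstar with h | h
    · exact hmono ⟨ht.1, h⟩ ⟨le_of_lt htIoo.1, le_refl _⟩ h
    · exact hanti (Set.mem_Icc.mpr ⟨le_refl _, le_of_lt htIoo.2⟩) (Set.mem_Icc.mpr ⟨h, le_of_lt ht.2⟩) h
  · -- uniqueness
    intro t ht htan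
    have hcos : 0 < Real.cos t := Real.cos_pos_of_mem_Ioo ⟨by linarith [ht.1], ht.2⟩
    have hct : 0 < c + 2 * t := by linarith [ht.1]
    rw [Real.tan_eq_sin_div_cos] at htan
    have hgt : g t = 0 := by
      have : Real.sin t * (c + 2 * t) = Real.cos t := by
        field_simp at htan
        linarith [htan]
      have hgeq : g t = Real.sin t * (c + 2 * t) - Real.cos t := rfl
      rw [hgeq, this]; ring
    exact hgmono.injOn ⟨le_of_lt ht.1, le_of_lt ht.2⟩ htmem (by rw [hgt, htzero])
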